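/- Let a be a real number, let m, n be positive integers, and for k = 1,…,2m let x_k = (x_{k,1},…,x_{k,n}) ∈ ℝ^n be such that |x_{1,r_1} x_{2,r_2} ⋯ x_{2m,r_{2m}}| < 1 for all tuples (r_1,…,r_{2m}) ∈ {1,…,n}^{2m}. Then Det( (1 − x_{1,r_1} x_{2,r_2} ⋯ x_{2m,r_{2m}})^{−a} )_{1≤r_1,…,r_{2m}≤n} = ∑_{i_1 > ⋯ > i_n ≥ 0} ∏_{j=1}^{n} ( (a)_{i_j} / i_j! ) · ∏_{k=1}^{2m} det( (x_{k,r})^{i_s} )_{1≤r,s≤n}, the sum running over all strictly decreasing n-tuples of nonnegative integers. In particular, if a ≥ 0 and x_{k,1} > ⋯ > x_{k,n} ≥ 0 for every k, this hyperdeterminant is nonnegative. -/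

import Mathlib

open scoped BigOperators

/-- Cayley's first hyperdeterminant of a real `2m`-dimensional array of size `n`
in each direction. -/
noncomputable def hyperDet (m n : ℕ) (A : (Fin (2 * m) → Fin n) → ℝ) : ℝ :=
  ((n.factorial : ℕ) : ℝ)⁻¹ *
    ∑ σ : Fin (2 * m) → Equiv.Perm (Fin n),
      (∏ k : Fin (2 * m), ((Equiv.Perm.sign (σ k) : ℤ) : ℝ)) *
        ∏ j : Fin n, A (fun k => σ k j)

/-- The classical rising factorial `(a)_i = a(a+1)⋯(a+i-1)`. -/
noncomputable def risingFactorial (a : ℝ) (i : ℕ) : ℝ :=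
  ∏ t ∈ Finset.range i, (a + t)

noncomputable def rfc (a : ℝ) (i : ℕ) : ℝ := risingFactorial a i * ((i.factorial : ℕ) : ℝ)⁻¹

lemma risingFactorial_succ (a : ℝ) (i : ℕ) :
    risingFactorial a (i + 1) = risingFactorial a i * (a + i) := Finset.prod_range_succ _ _

lemma rfc_zero (a : ℝ) : rfc a 0 = 1 := by simp [rfc, risingFactorial]

lemma rfc_succ (a : ℝ) (i : ℕ) : rfc a (i + 1) * (i + 1) = rfc a i * (a + i) := by
  have hfac : ((i + 1).factorial : ℝ) = (i.factorial : ℝ) * (i + 1) := by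
    rw [Nat.factorial_succ]; push_cast; ring
  have h1 : ((i + 1 : ℕ) : ℝ) ≠ 0 := by positivity
  have h2 : ((i.factorial : ℕ) : ℝ) ≠ 0 := by positivity
  simp only [rfc, hfac, risingFactorial_succ]
  field_simp

lemma rfc_nonneg {a : ℝ} (ha : 0 ≤ a) (i : ℕ) : 0 ≤ rfc a i := by
  have : 0 ≤ risingFactorial a i := Finset.prod_nonneg fun t _ => by positivity
  have h2 : (0:ℝ) ≤ ((i.factorial : ℕ) : ℝ)⁻¹ := by positivity
  exact mul_nonneg this h2

lemma rfc_pos {a : ℝ} (ha : 0 < a) (i : ℕ) : 0 < rfc a i := by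
  have : 0 < risingFactorial a i := Finset.prod_pos fun t _ => by positivity
  have h2 : (0:ℝ) < ((i.factorial : ℕ) : ℝ)⁻¹ := by positivity
  exact mul_pos this h2

lemma abs_rfc_le (a : ℝ) (i : ℕ) : |rfc a i| ≤ rfc (|a| + 1) i := by
  have h1 : |risingFactorial a i| ≤ risingFactorial (|a| + 1) i := by
    rw [risingFactorial, risingFactorial, Finset.abs_prod]
    apply Finset.prod_le_prod (fun t _ => abs_nonneg _)
    intro t _
    calc |a + (t:ℝ)| ≤ |a| + t := by
          simpa using (abs_add_le a (t:ℝ)).trans (by simp)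
      _ ≤ |a| + 1 + t := by linarith
  have h2 : (0:ℝ) < ((i.factorial : ℕ) : ℝ)⁻¹ := by positivity
  calc |rfc a i| = |risingFactorial a i| * ((i.factorial : ℕ) : ℝ)⁻¹ := by
        rw [rfc, abs_mul, abs_of_pos h2]
    _ ≤ risingFactorial (|a| + 1) i * ((i.factorial : ℕ) : ℝ)⁻¹ :=
        mul_le_mul_of_nonneg_right h1 (le_of_lt h2)

lemma summable_main {b r : ℝ} (hb : 0 < b) (hr0 : 0 ≤ r) (hr1 : r < 1) :
    Summable (fun i : ℕ => (i + 1 : ℝ) * rfc b i * r ^ i) := by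
  rcases eq_or_lt_of_le hr0 with h | h
  · apply summable_of_ne_finset_zero (s := {0})
    intro i hi
    have : i ≠ 0 := by simpa using hi
    rw [← h]
    simp [zero_pow this]
  · apply summable_of_ratio_test_tendsto_lt_one hr1
    · filter_upwards with i
      have := rfc_pos hb i
      positivity
    · have : ∀ i : ℕ, ‖(↑(i+1) + 1 : ℝ) * rfc b (i+1) * r ^ (i+1)‖ / ‖(i + 1 : ℝ) * rfc b i * r ^ i‖
          = ((i + 2 : ℝ) / (i + 1)) * ((b + i) / (i + 1)) * r := by
        intro i
        have h1 : rfc b (i + 1) = rfc b i * (b + i) / (i + 1) := by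
          have := rfc_succ b i
          field_simp at this ⊢
          linarith
        rw [h1]
        have hb1 : 0 < rfc b i := rfc_pos hb i
        rw [Real.norm_eq_abs, Real.norm_eq_abs]
        rw [abs_of_pos (by positivity), abs_of_pos (by positivity)]
        push_cast
        field_simp
        ring
      simp_rw [this]
      have key : ∀ c : ℝ, Filter.Tendsto (fun i : ℕ => (1 + c * (1 / (i + 1 : ℝ)))) Filter.atTop (nhds 1) := by
        intro c
        have := (tendsto_one_div_add_atTop_nhds_zero_nat.const_mul c).const_add 1
        simpa using this
      have h2 : Filter.Tendsto (fun i : ℕ => ((i + 2 : ℝ) / (i + 1))) Filter.atTop (nhds 1) := by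
        have := key 1
        apply this.congr
        intro i
        have : (i + 1 : ℝ) ≠ 0 := by positivity
        field_simp
        ring
      have h3 : Filter.Tendsto (fun i : ℕ => ((b + i : ℝ) / (i + 1))) Filter.atTop (nhds 1) := by
        have := key (b - 1)
        apply this.congr
        intro i
        have : (i + 1 : ℝ) ≠ 0 := by positivity
        field_simp
        ring
      have := (h2.mul h3).mul_const r
      simpa using this

lemma summable_rfc_mul {b r : ℝ} (hb : 0 < b) (hr0 : 0 ≤ r) (hr1 : r < 1) :
    Summable (fun i : ℕ => rfc b i * r ^ i) := by
  apply Summable.of_nonneg_of_le (fun i => by have := rfc_pos hb i; positivity)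
    (fun i => ?_) (summable_main hb hr0 hr1)
  have h1 : 0 ≤ rfc b i * r ^ i := by have := rfc_pos hb i; positivity
  nlinarith [rfc_pos hb i, pow_nonneg hr0 i, (Nat.cast_nonneg (α := ℝ) i)]

lemma summable_abs_rfc {a z : ℝ} (hz : |z| < 1) :
    Summable (fun i : ℕ => |rfc a i * z ^ i|) := by
  apply Summable.of_nonneg_of_le (fun i => abs_nonneg _) (fun i => ?_)
    (summable_rfc_mul (b := |a| + 1) (by positivity) (abs_nonneg z) hz)
  rw [abs_mul, abs_pow]
  exact mul_le_mul_of_nonneg_right (abs_rfc_le a i) (by positivity)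

lemma summable_rfc {a z : ℝ} (hz : |z| < 1) :
    Summable (fun i : ℕ => rfc a i * z ^ i) :=
  (summable_abs_rfc hz).of_abs

/-- The binomial series. -/
theorem hasSum_binomial (a : ℝ) {z : ℝ} (hz : |z| < 1) :
    HasSum (fun i : ℕ => rfc a i * z ^ i) ((1 - z) ^ (-a)) := by
  classical
  set G : ℝ → ℝ := fun y => ∑' i : ℕ, rfc a i * y ^ i with hG
  set D : ℝ → ℝ := fun y => ∑' i : ℕ, rfc a i * (i * y ^ (i - 1)) with hD
  have hb : (0:ℝ) < |a| + 1 := by positivity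
  -- summability of the term-wise series
  have hsumh : ∀ y : ℝ, |y| < 1 → Summable (fun i : ℕ => rfc a i * (i * y ^ (i - 1))) := by
    intro y hy
    set r : ℝ := (|y| + 1) / 2 with hr
    have hry : |y| < r := by rw [hr]; linarith [abs_nonneg y]
    have hr0 : 0 < r := by positivity
    have hr1 : r < 1 := by rw [hr]; linarith
    have key : Summable (fun i : ℕ => |rfc a i * (i * y ^ (i - 1))|) := by
      apply Summable.of_nonneg_of_le (fun i => abs_nonneg _) (fun i => ?_)
        ((summable_main hb hr0.le hr1).mul_right r⁻¹)
      rw [abs_mul, abs_mul, abs_pow, Nat.abs_cast]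
      calc |rfc a i| * ((i:ℝ) * |y| ^ (i - 1))
          ≤ rfc (|a| + 1) i * ((i:ℝ) * r ^ (i - 1)) := by
            apply mul_le_mul (abs_rfc_le a i) ?_ (by positivity)
              (le_of_lt (rfc_pos hb i))
            exact mul_le_mul_of_nonneg_left
              (pow_le_pow_left₀ (abs_nonneg y) hry.le _) (Nat.cast_nonneg i)
        _ ≤ (i + 1 : ℝ) * rfc (|a| + 1) i * r ^ i * r⁻¹ := by
            rcases Nat.eq_zero_or_pos i with h0 | h0
            · subst h0; simp [rfc_zero]; positivity
            · have hpw : r ^ (i - 1) = r ^ i * r⁻¹ := by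
                have h2 : r ^ i = r ^ (i-1) * r := by
                  rw [← pow_succ]; congr 1; omega
                rw [h2]
                field_simp
              rw [hpw]
              nlinarith [mul_nonneg (mul_nonneg (rfc_pos hb i).le (pow_nonneg hr0.le i))
                (inv_nonneg.2 hr0.le), (Nat.cast_nonneg (α := ℝ) i)]
    exact key.of_abs
  have hsumS1 : ∀ y : ℝ, |y| < 1 → Summable (fun i : ℕ => (i:ℝ) * (rfc a i * y ^ i)) := by
    intro y hy
    have key : Summable (fun i : ℕ => |(i:ℝ) * (rfc a i * y ^ i)|) := by
      apply Summable.of_nonneg_of_le (fun i => abs_nonneg _) (fun i => ?_)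
        (summable_main hb (abs_nonneg y) hy)
      rw [abs_mul, abs_mul, abs_pow, Nat.abs_cast]
      have h1 : (i:ℝ) ≤ (i + 1 : ℝ) := by linarith
      have h2 := abs_rfc_le a i
      have h3 := rfc_pos hb i
      have h4 : (0:ℝ) ≤ |y| ^ i := by positivity
      nlinarith [mul_le_mul_of_nonneg_left (mul_le_mul_of_nonneg_right h2 h4)
        (Nat.cast_nonneg (α := ℝ) i), mul_nonneg h3.le h4]
    exact key.of_abs
  -- derivative of G
  have hderiv : ∀ y : ℝ, y ∈ Set.Ioo (-1:ℝ) 1 → HasDerivAt G (D y) y := by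
    rintro y ⟨hy1, hy2⟩
    have hy : |y| < 1 := abs_lt.2 ⟨hy1, hy2⟩
    set r : ℝ := (|y| + 1) / 2 with hr
    have hry : |y| < r := by rw [hr]; linarith [abs_nonneg y]
    have hr0 : 0 < r := by positivity
    have hr1 : r < 1 := by rw [hr]; linarith
    have harg1 : ∀ (i : ℕ) (w : ℝ), w ∈ Set.Ioo (-r) r →
        HasDerivAt (fun w : ℝ => rfc a i * w ^ i) (rfc a i * ((i:ℝ) * w ^ (i - 1))) w := by
      intro i w _
      simpa [mul_comm, mul_assoc, mul_left_comm] using ((hasDerivAt_pow i w).const_mul (rfc a i))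
    have harg2 : ∀ (i : ℕ) (w : ℝ), w ∈ Set.Ioo (-r) r →
        ‖rfc a i * ((i:ℝ) * w ^ (i - 1))‖ ≤ (i + 1 : ℝ) * rfc (|a| + 1) i * r ^ i * r⁻¹ := by
      intro i w hw
      rw [Real.norm_eq_abs, abs_mul, abs_mul, abs_pow, Nat.abs_cast]
      have hwr : |w| ≤ r := le_of_lt (abs_lt.2 ⟨hw.1, hw.2⟩)
      calc |rfc a i| * ((i:ℝ) * |w| ^ (i - 1))
          ≤ rfc (|a| + 1) i * ((i:ℝ) * r ^ (i - 1)) := by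
            apply mul_le_mul (abs_rfc_le a i) ?_ (by positivity)
              (le_of_lt (rfc_pos hb i))
            exact mul_le_mul_of_nonneg_left
              (pow_le_pow_left₀ (abs_nonneg w) hwr _) (Nat.cast_nonneg i)
        _ ≤ (i + 1 : ℝ) * rfc (|a| + 1) i * r ^ i * r⁻¹ := by
            rcases Nat.eq_zero_or_pos i with h0 | h0
            · subst h0; simp [rfc_zero]; positivity
            · have hpw : r ^ (i - 1) = r ^ i * r⁻¹ := by
                have h2 : r ^ i = r ^ (i-1) * r := by
                  rw [← pow_succ]; congr 1; omega
                rw [h2]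
                field_simp
              rw [hpw]
              nlinarith [mul_nonneg (mul_nonneg (rfc_pos hb i).le (pow_nonneg hr0.le i))
                (inv_nonneg.2 hr0.le), (Nat.cast_nonneg (α := ℝ) i)]
    have harg3 : (0:ℝ) ∈ Set.Ioo (-r) r := ⟨by linarith, hr0⟩
    have harg4 : Summable (fun i : ℕ => rfc a i * (0:ℝ) ^ i) := by
      apply summable_of_ne_finset_zero (s := ({0} : Finset ℕ))
      intro i hi
      have : i ≠ 0 := by simpa using hi
      simp [zero_pow this]
    exact hasDerivAt_tsum_of_isPreconnected
      ((summable_main hb hr0.le hr1).mul_right r⁻¹)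
      isOpen_Ioo (convex_Ioo (-r) r).isPreconnected
      harg1 harg2 harg3 harg4 (abs_lt.1 hry)
  -- the differential equation
  have hODE : ∀ y : ℝ, |y| < 1 → (1 - y) * D y = a * G y := by
    intro y hy
    have hsh := hsumh y hy
    have hS1 := hsumS1 y hy
    have hGsum : Summable (fun i : ℕ => rfc a i * y ^ i) := summable_rfc hy
    have e1 : D y = a * G y + ∑' i : ℕ, (i:ℝ) * (rfc a i * y ^ i) := by
      show (∑' i : ℕ, rfc a i * ((i:ℝ) * y ^ (i - 1))) = _
      rw [hsh.tsum_eq_zero_add]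
      simp only [Nat.cast_zero, pow_zero]
      have : ∀ i : ℕ, rfc a (i+1) * ((i+1 : ℕ) * y ^ ((i+1) - 1))
          = a * (rfc a i * y ^ i) + (i:ℝ) * (rfc a i * y ^ i) := by
        intro i
        have h := rfc_succ a i
        have : rfc a (i+1) * ((i+1:ℕ):ℝ) = rfc a i * (a + i) := by push_cast at h ⊢; linarith
        calc rfc a (i+1) * ((i+1 : ℕ) * y ^ ((i+1) - 1))
            = (rfc a (i+1) * ((i+1:ℕ):ℝ)) * y ^ i := by push_cast; ring
          _ = (rfc a i * (a + i)) * y ^ i := by rw [this]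
          _ = a * (rfc a i * y ^ i) + (i:ℝ) * (rfc a i * y ^ i) := by ring
      rw [tsum_congr this, Summable.tsum_add (hGsum.mul_left a) hS1, tsum_mul_left]
      simp [hG]
    have e2 : y * D y = ∑' i : ℕ, (i:ℝ) * (rfc a i * y ^ i) := by
      show y * (∑' i : ℕ, rfc a i * ((i:ℝ) * y ^ (i - 1))) = _
      rw [← tsum_mul_left]
      apply tsum_congr
      intro i
      rcases Nat.eq_zero_or_pos i with h0 | h0
      · subst h0; simp
      · have : y ^ (i - 1) * y = y ^ i := by
          rw [← pow_succ]; congr 1; omega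
        calc y * (rfc a i * ((i:ℝ) * y ^ (i - 1))) = (i:ℝ) * rfc a i * (y ^ (i-1) * y) := by ring
          _ = (i:ℝ) * (rfc a i * y ^ i) := by rw [this]; ring
    have h5 : D y - y * D y = a * G y := by rw [e2, e1]; ring
    linarith
  -- constancy of H y = G y * (1 - y)^a
  set H : ℝ → ℝ := fun y => G y * (1 - y) ^ a with hH
  have hHderiv : ∀ y ∈ Set.Ioo (-1:ℝ) 1, HasDerivWithinAt H 0 (Set.Ioo (-1:ℝ) 1) y := by
    intro y hy
    have hy' : |y| < 1 := abs_lt.2 ⟨hy.1, hy.2⟩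
    have h1y : (0:ℝ) < 1 - y := by linarith [hy.2]
    have hrpow : HasDerivAt (fun w : ℝ => (1 - w) ^ a) (a * (1 - y) ^ (a - 1) * (-1)) y := by
      have h1 : HasDerivAt (fun w : ℝ => 1 - w) (-1) y := by
        simpa using ((hasDerivAt_id y).const_sub 1)
      have h2 := Real.hasDerivAt_rpow_const (x := 1 - y) (p := a) (Or.inl h1y.ne')
      exact h2.comp y h1
    have hmul := (hderiv y hy).mul hrpow
    have hzero : D y * (1 - y) ^ a + G y * (a * (1 - y) ^ (a - 1) * (-1)) = 0 := by
      have hps : (1 - y) ^ a = (1 - y) ^ (a - 1) * (1 - y) := by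
        rw [← Real.rpow_add_one h1y.ne' (a - 1)]
        ring_nf
      rw [hps]
      have h6 := hODE y hy'
      linear_combination (1 - y) ^ (a - 1) * h6
    rw [hzero] at hmul
    exact hmul.hasDerivWithinAt
  have hzmem : z ∈ Set.Ioo (-1:ℝ) 1 := ⟨(abs_lt.1 hz).1, (abs_lt.1 hz).2⟩
  have h0mem : (0:ℝ) ∈ Set.Ioo (-1:ℝ) 1 := by constructor <;> norm_num
  have hconst : H z = H 0 := by
    have := Convex.norm_image_sub_le_of_norm_hasDerivWithin_le
      (f := H) (f' := fun _ => (0:ℝ)) (C := 0) (fun y hy => hHderiv y hy)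
      (fun y _ => by simp) (convex_Ioo _ _) h0mem hzmem
    have h0 : ‖H z - H 0‖ ≤ 0 := by simpa using this
    have := norm_nonneg (H z - H 0)
    have : ‖H z - H 0‖ = 0 := le_antisymm h0 this
    have := norm_eq_zero.1 this
    linarith [sub_eq_zero.1 this]
  have hH0 : H 0 = 1 := by
    rw [hH]
    simp only [sub_zero, Real.one_rpow, mul_one]
    rw [hG]
    simp only
    rw [tsum_eq_single 0 (fun i hi => by simp [zero_pow hi])]
    simp [rfc_zero]
  have h1z : (0:ℝ) < 1 - z := by linarith [(abs_lt.1 hz).2]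
  have hpos : (0:ℝ) < (1 - z) ^ a := Real.rpow_pos_of_pos h1z a
  have hGz : G z = (1 - z) ^ (-a) := by
    have h1 : G z * (1 - z) ^ a = 1 := by
      have h2 : H z = 1 := hconst.trans hH0
      simpa [hH] using h2
    rw [Real.rpow_neg h1z.le]
    exact eq_inv_of_mul_eq_one_right (by linarith [mul_comm (G z) ((1 - z) ^ a)] : (1 - z) ^ a * G z = 1)
  exact (summable_rfc hz).hasSum_iff.2 hGz

lemma summable_pi_prod_abs : ∀ (n : ℕ) (u : Fin n → ℕ → ℝ),
    (∀ j, Summable fun i => |u j i|) →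
    Summable (fun f : Fin n → ℕ => |∏ j, u j (f j)|) := by
  intro n
  induction n with
  | zero =>
    intro u hu
    haveI : Unique (Fin 0 → ℕ) := Pi.uniqueOfIsEmpty _
    haveI : Finite (Fin 0 → ℕ) := Finite.of_subsingleton
    exact Summable.of_finite
  | succ n ih =>
    intro u hu
    have h1 : Summable (fun p : ℕ × (Fin n → ℕ) =>
        ‖u 0 p.1 * ∏ j : Fin n, u j.succ (p.2 j)‖) := by
      apply Summable.mul_norm (f := u 0)
        (g := fun v : Fin n → ℕ => ∏ j : Fin n, u j.succ (v j))
      · exact (hu 0).congr fun i => (Real.norm_eq_abs _).symm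
      · exact (ih (fun j => u j.succ) (fun j => hu j.succ)).congr
          fun v => (Real.norm_eq_abs _).symm
    rw [← (Fin.consEquiv (fun _ : Fin (n+1) => ℕ)).summable_iff]
    apply h1.congr
    intro p
    rw [Real.norm_eq_abs]
    congr 1
    rw [Fin.prod_univ_succ]
    simp [Fin.consEquiv]

lemma tsum_pi_prod : ∀ (n : ℕ) (u : Fin n → ℕ → ℝ),
    (∀ j, Summable fun i => |u j i|) →
    ∑' f : Fin n → ℕ, ∏ j, u j (f j) = ∏ j, ∑' i, u j i := by
  intro n
  induction n with
  | zero =>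
    intro u hu
    haveI : Unique (Fin 0 → ℕ) := Pi.uniqueOfIsEmpty _
    simp only [Finset.univ_eq_empty, Finset.prod_empty]
    rw [tsum_eq_single (fun _ => 0) (fun f hf => absurd (Subsingleton.elim f _) hf)]
  | succ n ih =>
    intro u hu
    rw [← ((Fin.consEquiv (fun _ : Fin (n+1) => ℕ))).tsum_eq]
    have h2 : ∀ p : ℕ × (Fin n → ℕ),
        ∏ j : Fin (n+1), u j ((Fin.consEquiv (fun _ : Fin (n+1) => ℕ)) p j)
        = u 0 p.1 * ∏ j : Fin n, u j.succ (p.2 j) := by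
      intro p
      rw [Fin.prod_univ_succ]
      simp [Fin.consEquiv]
    rw [tsum_congr h2, ← tsum_mul_tsum_of_summable_norm (f := u 0)
      (g := fun v : Fin n → ℕ => ∏ j : Fin n, u j.succ (v j))
      ((hu 0).congr fun i => (Real.norm_eq_abs _).symm)
      ((summable_pi_prod_abs n (fun j => u j.succ) (fun j => hu j.succ)).congr
        fun v => (Real.norm_eq_abs _).symm)]
    rw [Fin.prod_univ_succ, ih (fun j => u j.succ) (fun j => hu j.succ)]

/-- A "polynomial" with `n` terms and `n` distinct positive roots is identically zero. -/
lemma fewnomial : ∀ (n : ℕ) (c : Fin n → ℝ) (e : Fin n → ℕ), StrictAnti e →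
    ∀ (t : Fin n → ℝ), StrictAnti t → (∀ j, 0 < t j) →
    (∀ j, ∑ s, c s * t j ^ e s = 0) → ∀ s, c s = 0 := by
  intro n
  induction n with
  | zero => intro c e he t ht htpos hroot s; exact absurd s.2 (by omega)
  | succ n ih =>
    intro c e he t ht htpos hroot
    set L := Fin.last n with hL
    set d : Fin (n+1) → ℕ := fun s => e s - e L with hd
    have hdL : d L = 0 := by simp [hd]
    have hed : ∀ s, d s + e L = e s := by
      intro s
      have : e L ≤ e s := he.antitone (Fin.le_last s)
      simp only [hd]
      omega
    have hd1 : ∀ s : Fin n, 1 ≤ d s.castSucc := by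
      intro s
      have h1 : e L < e s.castSucc := he (Fin.castSucc_lt_last s)
      simp only [hd]; omega
    set q : ℝ → ℝ := fun w => ∑ s, c s * w ^ d s with hq
    set q' : ℝ → ℝ := fun w => ∑ s, c s * ((d s : ℝ) * w ^ (d s - 1)) with hq'
    have hderiv : ∀ w : ℝ, HasDerivAt q (q' w) w := by
      intro w
      apply HasDerivAt.fun_sum
      intro s _
      simpa [mul_comm, mul_assoc, mul_left_comm] using ((hasDerivAt_pow (d s) w).const_mul (c s))
    have hqroot : ∀ j, q (t j) = 0 := by
      intro j
      have hpow : (0:ℝ) < t j ^ e L := pow_pos (htpos j) _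
      have h1 : q (t j) * t j ^ e L = 0 := by
        rw [hq]
        simp only
        rw [Finset.sum_mul]
        rw [← hroot j]
        apply Finset.sum_congr rfl
        intro s _
        rw [mul_assoc, ← pow_add, hed s]
      rcases mul_eq_zero.1 h1 with h | h
      · exact h
      · exact absurd h hpow.ne'
    -- Rolle
    have hex : ∀ j : Fin n, ∃ w, w ∈ Set.Ioo (t j.succ) (t j.castSucc) ∧ q' w = 0 := by
      intro j
      have hlt : t j.succ < t j.castSucc := ht Fin.castSucc_lt_succ
      obtain ⟨w, hw1, hw2⟩ := exists_hasDerivAt_eq_zero hlt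
        (fun w _ => (hderiv w).continuousAt.continuousWithinAt)
        (by rw [hqroot, hqroot]) (fun w _ => hderiv w)
      exact ⟨w, hw1, hw2⟩
    choose u hu1 hu2 using hex
    have hu_anti : StrictAnti u := by
      intro j j' hjj'
      have h1 : j.succ ≤ j'.castSucc := by
        rw [Fin.le_castSucc_iff]
        exact Fin.succ_lt_succ_iff.2 hjj'
      calc u j' < t j'.castSucc := (hu1 j').2
        _ ≤ t j.succ := ht.antitone h1
        _ < u j := (hu1 j).1
    have hu_pos : ∀ j, 0 < u j := fun j => lt_trans (htpos j.succ) (hu1 j).1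
    have he' : StrictAnti (fun s : Fin n => d s.castSucc - 1) := by
      intro s s' hss'
      have h1 : e s'.castSucc < e s.castSucc := he (Fin.castSucc_lt_castSucc_iff.2 hss')
      have h2 := hd1 s
      have h3 := hd1 s'
      have h4 : e L ≤ e s'.castSucc := he.antitone (Fin.le_last _)
      simp only [hd] at *
      omega
    have hroot' : ∀ j : Fin n,
        ∑ s : Fin n, (c s.castSucc * (d s.castSucc : ℝ)) * u j ^ (d s.castSucc - 1) = 0 := by
      intro j
      have h1 := hu2 j
      rw [hq'] at h1
      simp only at h1
      rw [Fin.sum_univ_castSucc] at h1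
      rw [hdL] at h1
      simp only [Nat.cast_zero, zero_mul, mul_zero, add_zero] at h1
      rw [← h1]
      apply Finset.sum_congr rfl
      intro s _
      ring
    have hc' := ih (fun s => c s.castSucc * (d s.castSucc : ℝ))
      (fun s => d s.castSucc - 1) he' u hu_anti hu_pos hroot'
    have hcast : ∀ s : Fin n, c s.castSucc = 0 := by
      intro s
      have h1 := hc' s
      have h2 : ((d s.castSucc : ℕ) : ℝ) ≠ 0 := by
        have := hd1 s
        positivity
      simpa [h2] using h1
    have hclast : c L = 0 := by
      have h1 := hroot 0
      rw [Fin.sum_univ_castSucc] at h1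
      have h2 : ∀ s : Fin n, c s.castSucc * t 0 ^ e s.castSucc = 0 := by
        intro s; rw [hcast s, zero_mul]
      rw [Finset.sum_eq_zero (fun s _ => h2 s), zero_add] at h1
      have h3 : (0:ℝ) < t 0 ^ e (Fin.last n) := pow_pos (htpos 0) _
      rcases mul_eq_zero.1 h1 with h | h
      · exact h
      · exact absurd h h3.ne'
    intro s
    rcases Fin.eq_castSucc_or_eq_last s with ⟨s', rfl⟩ | rfl
    · exact hcast s'
    · exact hclast

lemma strictAnti_cons {n : ℕ} {g : Fin n → ℝ} (hg : StrictAnti g) {s : ℝ}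
    (hs : ∀ r, g r < s) : StrictAnti (Fin.cons s g : Fin (n+1) → ℝ) := by
  intro i j hij
  rcases Fin.eq_zero_or_eq_succ j with rfl | ⟨r, rfl⟩
  · exact absurd hij (Fin.not_lt_zero _)
  · rcases Fin.eq_zero_or_eq_succ i with rfl | ⟨r', rfl⟩
    · simpa using hs r
    · have h1 : r' < r := Fin.succ_lt_succ_iff.1 hij
      simpa using hg h1

lemma gv_pos : ∀ (n : ℕ) (x : Fin n → ℝ), StrictAnti x → (∀ r, 0 < x r) →
    ∀ (e : Fin n → ℕ), StrictAnti e →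
    0 < Matrix.det (Matrix.of fun r s : Fin n => x r ^ e s) := by
  intro n
  induction n with
  | zero =>
    intro x hx hxpos e he
    simp [Matrix.det_isEmpty]
  | succ n ih =>
    intro x hx hxpos e he
    rcases Nat.eq_zero_or_pos n with rfl | hn
    · rw [Matrix.det_fin_one]
      exact pow_pos (hxpos 0) _
    -- the minors and coefficients
    set N : Fin (n+1) → Matrix (Fin n) (Fin n) ℝ :=
      fun j => Matrix.of fun r s => x r.succ ^ e (j.succAbove s) with hN
    set b : Fin (n+1) → ℝ := fun j => (-1 : ℝ) ^ (j : ℕ) * (N j).det with hb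
    set F : ℝ → ℝ := fun w => ∑ j, b j * w ^ e j with hF
    have hdetF : ∀ w : ℝ,
        Matrix.det (Matrix.of fun p s : Fin (n+1) => Function.update x 0 w p ^ e s) = F w := by
      intro w
      rw [Matrix.det_succ_row_zero]
      apply Finset.sum_congr rfl
      intro j _
      have h1 : (Matrix.of fun p s : Fin (n+1) => Function.update x 0 w p ^ e s).submatrix
          Fin.succ j.succAbove = N j := by
        ext r s
        simp [Matrix.submatrix, hN, Function.update_of_ne (Fin.succ_ne_zero r)]
      rw [h1]
      simp only [Matrix.of_apply, Function.update_self, hb]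
      ring
    have hx0 : Function.update x 0 (x 0) = x := by
      ext p
      rcases eq_or_ne p 0 with rfl | h
      · simp
      · simp [Function.update_of_ne h]
    have hgoal : Matrix.det (Matrix.of fun r s : Fin (n+1) => x r ^ e s) = F (x 0) := by
      rw [← hdetF (x 0), hx0]
    rw [hgoal]
    -- positivity of the leading coefficient
    have hb0 : 0 < b 0 := by
      have h1 : N 0 = Matrix.of fun r s : Fin n => x r.succ ^ e s.succ := by
        ext r s
        simp [hN, Fin.zero_succAbove]
      rw [hb]
      simp only [Fin.val_zero, pow_zero, one_mul, h1]
      exact ih (fun r => x r.succ) (hx.comp_strictMono (Fin.strictMono_succ))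
        (fun r => hxpos r.succ) (fun s => e s.succ)
        (he.comp_strictMono (Fin.strictMono_succ))
    -- roots at x r.succ
    have hFroot : ∀ r : Fin n, F (x r.succ) = 0 := by
      intro r
      rw [← hdetF (x r.succ)]
      apply Matrix.det_zero_of_row_eq (i := 0) (j := r.succ) (Fin.succ_ne_zero r).symm
      ext s
      simp [Function.update_of_ne (Fin.succ_ne_zero r)]
    -- eventual positivity
    have he0 : ∀ j : Fin n, e j.succ < e 0 := fun j => he (Fin.succ_pos j)
    have he01 : 1 ≤ e 0 := by
      have := he0 ⟨0, hn⟩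
      omega
    set B : ℝ := ∑ j : Fin n, |b j.succ| with hB
    have hBnn : 0 ≤ B := Finset.sum_nonneg fun j _ => abs_nonneg _
    have hT : ∃ T : ℝ, x 0 < T ∧ 0 < F T := by
      refine ⟨max (max 1 (x 0 + 1)) ((B + 1) / b 0), ?_, ?_⟩
      · calc x 0 < x 0 + 1 := by linarith
          _ ≤ max 1 (x 0 + 1) := le_max_right _ _
          _ ≤ _ := le_max_left _ _
      · set T := max (max 1 (x 0 + 1)) ((B + 1) / b 0) with hTd
        have hT1 : (1:ℝ) ≤ T := le_trans (le_max_left _ _) (le_max_left _ _)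
        have hT0 : (0:ℝ) < T := by linarith
        have hTB : B + 1 ≤ b 0 * T := by
          have h1 : (B + 1) / b 0 ≤ T := le_max_right _ _
          rw [div_le_iff₀ hb0] at h1
          linarith [mul_comm (b 0) T]
        have htail : ∀ j : Fin n, -( |b j.succ| * T ^ (e 0 - 1)) ≤ b j.succ * T ^ e j.succ := by
          intro j
          have h1 : T ^ e j.succ ≤ T ^ (e 0 - 1) :=
            pow_le_pow_right₀ hT1 (by have := he0 j; omega)
          have h2 : (0:ℝ) ≤ T ^ e j.succ := by positivity
          have h3 := neg_abs_le (b j.succ)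
          have h4 : |b j.succ| * T ^ e j.succ ≤ |b j.succ| * T ^ (e 0 - 1) :=
            mul_le_mul_of_nonneg_left h1 (abs_nonneg _)
          nlinarith [abs_nonneg (b j.succ)]
        have hsum : -(B * T ^ (e 0 - 1)) ≤ ∑ j : Fin n, b j.succ * T ^ e j.succ := by
          rw [hB, Finset.sum_mul, ← Finset.sum_neg_distrib]
          exact Finset.sum_le_sum fun j _ => htail j
        have hTe : T ^ e 0 = T ^ (e 0 - 1) * T := by
          rw [← pow_succ]
          congr 1
          omega
        have hpow : (0:ℝ) < T ^ (e 0 - 1) := by positivity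
        rw [hF]
        simp only
        rw [Fin.sum_univ_succ]
        have : b 0 * T ^ e 0 = b 0 * T * T ^ (e 0 - 1) := by rw [hTe]; ring
        nlinarith [hsum, hpow, hTB]
    obtain ⟨T, hTx, hTF⟩ := hT
    -- continuity of F
    have hFc : Continuous F := by
      rw [hF]
      exact continuous_finset_sum _ fun j _ => continuous_const.mul (continuous_pow (e j))
    -- main contradiction argument
    by_contra hcon
    push_neg at hcon
    have hs : ∃ s : ℝ, x 0 ≤ s ∧ F s = 0 := by
      rcases eq_or_lt_of_le hcon with h | h
      · exact ⟨x 0, le_refl _, h⟩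
      · have h0 : (0:ℝ) ∈ Set.Ioo (F (x 0)) (F T) := ⟨h, hTF⟩
        have := intermediate_value_Ioo hTx.le hFc.continuousOn h0
        obtain ⟨s, hs1, hs2⟩ := this
        exact ⟨s, hs1.1.le, hs2⟩
    obtain ⟨s, hsx, hsF⟩ := hs
    set t : Fin (n+1) → ℝ := Fin.cons s (fun r => x r.succ) with ht
    have ht_anti : StrictAnti t :=
      strictAnti_cons (hx.comp_strictMono Fin.strictMono_succ)
        (fun r => lt_of_lt_of_le (hx (Fin.succ_pos r)) hsx)
    have ht_pos : ∀ j, 0 < t j := by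
      intro j
      rcases Fin.eq_zero_or_eq_succ j with rfl | ⟨r, rfl⟩
      · simpa [ht] using lt_of_lt_of_le (hxpos 0) hsx
      · simpa [ht] using hxpos r.succ
    have ht_root : ∀ j, ∑ s', b s' * t j ^ e s' = 0 := by
      intro j
      rcases Fin.eq_zero_or_eq_succ j with rfl | ⟨r, rfl⟩
      · simpa [ht, hF] using hsF
      · have := hFroot r
        rw [hF] at this
        simpa [ht] using this
    have := fewnomial (n+1) b e he t ht_anti ht_pos ht_root 0
    exact absurd this hb0.ne'

lemma gv_nonneg (n : ℕ) (x : Fin n → ℝ) (hx : StrictAnti x) (hxnn : ∀ r, 0 ≤ x r)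
    (e : Fin n → ℕ) (he : StrictAnti e) :
    0 ≤ Matrix.det (Matrix.of fun r s : Fin n => x r ^ e s) := by
  rcases n with - | m
  · simp [Matrix.det_isEmpty]
  by_cases hpos : ∀ r, 0 < x r
  · exact (gv_pos (m+1) x hx hpos e he).le
  · push_neg at hpos
    obtain ⟨r0, hr0⟩ := hpos
    have hr0z : x r0 = 0 := le_antisymm hr0 (hxnn r0)
    have hlastz : x (Fin.last m) = 0 := by
      rcases eq_or_lt_of_le (Fin.le_last r0) with h | h
      · rw [← h]; exact hr0z
      · have := hx h
        have := hxnn (Fin.last m)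
        linarith [hr0z ▸ this]
    have hcs_pos : ∀ r : Fin m, 0 < x r.castSucc := by
      intro r
      have h1 := hx (Fin.castSucc_lt_last r)
      linarith [hlastz ▸ h1]
    by_cases helast : e (Fin.last m) = 0
    · -- last row is the unit vector at the last column
      have hrow : ∀ s : Fin (m+1),
          (Matrix.of fun r s : Fin (m+1) => x r ^ e s) (Fin.last m) s
          = if s = Fin.last m then 1 else 0 := by
        intro s
        rcases eq_or_ne s (Fin.last m) with rfl | h
        · simp [hlastz, helast]
        · have h1 : s < Fin.last m := lt_of_le_of_ne (Fin.le_last s) h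
          have h2 : 0 < e s := by have := he h1; omega
          simp [hlastz, h, zero_pow h2.ne']
      rw [Matrix.det_succ_row _ (Fin.last m)]
      rw [Finset.sum_eq_single (Fin.last m)]
      · rw [Matrix.of_apply]
        have h1 : x (Fin.last m) ^ e (Fin.last m) = 1 := by
          rw [helast, pow_zero]
        rw [h1, Fin.succAbove_last]
        have h2 : ((Matrix.of fun r s : Fin (m+1) => x r ^ e s).submatrix
            Fin.castSucc Fin.castSucc)
            = Matrix.of fun r s : Fin m => x r.castSucc ^ e s.castSucc := by
          ext r s
          simp [Matrix.submatrix]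
        rw [h2]
        have h3 := gv_pos m (fun r => x r.castSucc)
          (hx.comp_strictMono Fin.strictMono_castSucc) hcs_pos
          (fun s => e s.castSucc) (he.comp_strictMono Fin.strictMono_castSucc)
        have h4 : ((-1 : ℝ)) ^ ((Fin.last m : ℕ) + (Fin.last m : ℕ)) = 1 :=
          Even.neg_one_pow (Even.add_self _)
        rw [h4]
        linarith
      · intro s _ hs
        rw [hrow s, if_neg hs]
        ring
      · intro h
        exact absurd (Finset.mem_univ _) h
    · apply le_of_eq
      symm
      apply Matrix.det_eq_zero_of_row_eq_zero (Fin.last m)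
      intro s
      have h1 : 0 < e s := by
        have h2 : e (Fin.last m) ≤ e s := he.antitone (Fin.le_last s)
        omega
      simp [hlastz, zero_pow h1.ne']

theorem main_thm (a : ℝ) (m n : ℕ) (hm : 0 < m) (hn : 0 < n)
    (x : Fin (2 * m) → Fin n → ℝ)
    (hlt : ∀ r : Fin (2 * m) → Fin n, |∏ k : Fin (2 * m), x k (r k)| < 1) :
    ((n.factorial : ℕ) : ℝ)⁻¹ *
    ∑ σ : Fin (2 * m) → Equiv.Perm (Fin n),
      (∏ k : Fin (2 * m), ((Equiv.Perm.sign (σ k) : ℤ) : ℝ)) *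
        ∏ j : Fin n, (1 - ∏ k : Fin (2 * m), x k (σ k j)) ^ (-a) =
      ∑' i : {f : Fin n → ℕ // StrictAnti f},
        (∏ j : Fin n, rfc a (i.1 j)) *
          ∏ k : Fin (2 * m), Matrix.det (Matrix.of fun r s : Fin n => x k r ^ (i.1 s)) := by
  classical
  set T : (Fin n → ℕ) → ℝ := fun f => (∏ j, rfc a (f j)) *
    ∏ k : Fin (2 * m), Matrix.det (Matrix.of fun r s : Fin n => x k r ^ f s) with hT
  set u : (Fin (2*m) → Equiv.Perm (Fin n)) → Fin n → ℕ → ℝ :=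
    fun σ j i => rfc a i * (∏ k, x k (σ k j)) ^ i with hu
  have habs : ∀ σ j, Summable fun i => |u σ j i| := by
    intro σ j
    exact summable_abs_rfc (hlt (fun k => σ k j))
  -- step 1 : expansion of the product for a fixed σ
  have step1 : ∀ σ : Fin (2*m) → Equiv.Perm (Fin n),
      ∏ j : Fin n, (1 - ∏ k : Fin (2 * m), x k (σ k j)) ^ (-a)
      = ∑' f : Fin n → ℕ, ∏ j, u σ j (f j) := by
    intro σ
    rw [tsum_pi_prod n (u σ) (habs σ)]
    apply Finset.prod_congr rfl
    intro j _
    exact ((hasSum_binomial a (hlt (fun k => σ k j))).tsum_eq).symm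
  have hPsum : ∀ σ, Summable fun f : Fin n → ℕ => ∏ j, u σ j (f j) :=
    fun σ => (summable_pi_prod_abs n (u σ) (habs σ)).of_abs
  -- step 3 : pointwise identity
  have step3 : ∀ f : Fin n → ℕ,
      (∑ σ : Fin (2*m) → Equiv.Perm (Fin n),
        (∏ k, ((Equiv.Perm.sign (σ k) : ℤ) : ℝ)) * ∏ j, u σ j (f j)) = T f := by
    intro f
    have h1 : ∀ σ : Fin (2*m) → Equiv.Perm (Fin n),
        (∏ k, ((Equiv.Perm.sign (σ k) : ℤ) : ℝ)) * ∏ j, u σ j (f j)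
        = (∏ j, rfc a (f j)) *
          ∏ k, (((Equiv.Perm.sign (σ k) : ℤ) : ℝ) * ∏ j, x k (σ k j) ^ f j) := by
      intro σ
      rw [hu]
      simp only
      rw [Finset.prod_mul_distrib]
      have h2 : ∏ j : Fin n, (∏ k, x k (σ k j)) ^ f j
          = ∏ k, ∏ j : Fin n, x k (σ k j) ^ f j := by
        rw [Finset.prod_comm]
        apply Finset.prod_congr rfl
        intro j _
        rw [← Finset.prod_pow]
      rw [h2, Finset.prod_mul_distrib]
      ring
    rw [Finset.sum_congr rfl (fun σ _ => h1 σ), ← Finset.mul_sum]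
    rw [hT]
    congr 1
    have h3 : ∀ k (τ : Equiv.Perm (Fin n)),
        Matrix.det (Matrix.of fun r s : Fin n => x k r ^ f s) =
        Matrix.det (Matrix.of fun r s : Fin n => x k r ^ f s) := fun _ _ => rfl
    rw [← Fintype.piFinset_univ, ← Finset.prod_univ_sum
      (fun _ => (Finset.univ : Finset (Equiv.Perm (Fin n))))
      (fun k τ => ((Equiv.Perm.sign τ : ℤ) : ℝ) * ∏ j, x k (τ j) ^ f j)]
    apply Finset.prod_congr rfl
    intro k _
    rw [Matrix.det_apply']
    apply Finset.sum_congr rfl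
    intro τ _
    simp [Matrix.of_apply]
  -- summability of T
  have hTsum : Summable T := by
    apply Summable.congr _ step3
    exact summable_sum fun σ _ => (hPsum σ).mul_left _
  -- step 5 : hyperdeterminant as a tsum
  have step5 : ((n.factorial : ℕ) : ℝ)⁻¹ *
      ∑ σ : Fin (2 * m) → Equiv.Perm (Fin n),
        (∏ k, ((Equiv.Perm.sign (σ k) : ℤ) : ℝ)) *
          ∏ j : Fin n, (1 - ∏ k : Fin (2 * m), x k (σ k j)) ^ (-a)
      = ((n.factorial : ℕ) : ℝ)⁻¹ * ∑' f : Fin n → ℕ, T f := by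
    congr 1
    rw [Finset.sum_congr rfl (fun σ _ => by rw [step1 σ, ← tsum_mul_left])]
    rw [← Summable.tsum_finsetSum (fun σ _ => (hPsum σ).mul_left _)]
    exact tsum_congr step3
  rw [step5]
  -- step 6 : reduction to strictly decreasing tuples
  have hTvanish : ∀ f : Fin n → ℕ, ¬ Function.Injective f → T f = 0 := by
    intro f hf
    simp only [Function.Injective, not_forall] at hf
    obtain ⟨j, j', hjj', hne⟩ := hf
    rw [hT]
    simp only
    have k0 : Fin (2*m) := ⟨0, by omega⟩
    rw [Finset.prod_eq_zero (Finset.mem_univ k0), mul_zero]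
    apply Matrix.det_zero_of_column_eq hne
    intro r
    simp [hjj']
  have hTperm : ∀ (f : Fin n → ℕ) (τ : Equiv.Perm (Fin n)), T (f ∘ τ) = T f := by
    intro f τ
    rw [hT]
    simp only
    have h1 : ∏ j, rfc a ((f ∘ τ) j) = ∏ j, rfc a (f j) :=
      Equiv.prod_comp τ (fun j => rfc a (f j))
    have h2 : ∀ k, Matrix.det (Matrix.of fun r s : Fin n => x k r ^ (f ∘ τ) s)
        = ((Equiv.Perm.sign τ : ℤ) : ℝ) *
          Matrix.det (Matrix.of fun r s : Fin n => x k r ^ f s) := by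
      intro k
      have h3 : (Matrix.of fun r s : Fin n => x k r ^ (f ∘ τ) s)
          = (Matrix.of fun r s : Fin n => x k r ^ f s).submatrix id τ := rfl
      rw [h3, Matrix.det_permute']
    rw [h1, Finset.prod_congr rfl (fun k _ => h2 k), Finset.prod_mul_distrib,
      Finset.prod_const]
    have h4 : (((Equiv.Perm.sign τ : ℤ) : ℝ)) ^ (Finset.univ : Finset (Fin (2*m))).card = 1 := by
      rw [Finset.card_univ, Fintype.card_fin]
      rcases Int.units_eq_one_or (Equiv.Perm.sign τ) with h | h
      · rw [h]; norm_num
      · rw [h]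
        push_cast
        exact Even.neg_one_pow ⟨m, by ring⟩
    rw [h4, one_mul]
  set e : {f : Fin n → ℕ // StrictAnti f} × Equiv.Perm (Fin n) → (Fin n → ℕ) :=
    fun p => p.1.1 ∘ p.2 with he
  have hrevanti : ∀ (g : Fin n → ℕ), StrictAnti g → StrictMono (fun j => g (Fin.rev j)) := by
    intro g hg i j hij
    exact hg (Fin.rev_lt_rev.2 hij)
  have he_inj : Function.Injective e := by
    rintro ⟨⟨g, hg⟩, τ⟩ ⟨⟨g', hg'⟩, τ'⟩ hpe
    simp only [he, Prod.mk.injEq] at hpe ⊢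
    have hr : Set.range (g ∘ τ) = Set.range g := by
      rw [Set.range_comp, Equiv.range_eq_univ, Set.image_univ]
    have hr' : Set.range (g' ∘ τ') = Set.range g' := by
      rw [Set.range_comp, Equiv.range_eq_univ, Set.image_univ]
    have hgg' : g = g' := by
      have h1 := ((hrevanti g hg).range_inj (hrevanti g' hg')).1 ?_
      · funext j
        have := congrFun h1 (Fin.rev j)
        simpa [Fin.rev_rev] using this
      · have hrs : Function.Surjective (Fin.rev : Fin n → Fin n) :=
          fun j => ⟨Fin.rev j, Fin.rev_rev j⟩
        have e1 : Set.range (fun j => g (Fin.rev j)) = Set.range g :=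
          hrs.range_comp g
        have e2 : Set.range (fun j => g' (Fin.rev j)) = Set.range g' :=
          hrs.range_comp g'
        rw [e1, e2, ← hr, ← hr', hpe]
    subst hgg'
    refine ⟨rfl, ?_⟩
    apply Equiv.ext
    intro r
    exact hg.injective (congrFun hpe r)
  have hsupp : Function.support T ⊆ Set.range e := by
    intro f hf
    have hinj : Function.Injective f := by
      by_contra h
      exact hf (hTvanish f h)
    set τ₀ : Equiv.Perm (Fin n) := Tuple.sort f with hτ₀
    have hmono : Monotone (f ∘ τ₀) := Tuple.monotone_sort f
    have hGinj : Function.Injective (f ∘ τ₀) := hinj.comp τ₀.injective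
    have hGsm : StrictMono (f ∘ τ₀) := hmono.strictMono_of_injective hGinj
    set g : Fin n → ℕ := fun j => (f ∘ τ₀) (Fin.rev j) with hg
    have hganti : StrictAnti g := by
      intro i j hij
      exact hGsm (Fin.rev_lt_rev.2 hij)
    refine ⟨⟨⟨g, hganti⟩, τ₀.symm.trans (Fin.revPerm)⟩, ?_⟩
    funext r
    simp only [he, hg, Function.comp_apply, Equiv.trans_apply, Fin.revPerm_apply,
      Fin.rev_rev]
    exact congrArg f (τ₀.apply_symm_apply r)
  have hTe : (fun p => T (e p)) = fun p : {f : Fin n → ℕ // StrictAnti f} × Equiv.Perm (Fin n)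
      => T p.1.1 := by
    funext p
    exact hTperm p.1.1 p.2
  have hchain : ∑' f : Fin n → ℕ, T f
      = ((n.factorial : ℕ) : ℝ) * ∑' i : {f : Fin n → ℕ // StrictAnti f}, T i.1 := by
    rw [← he_inj.tsum_eq hsupp]
    have hsum' : Summable (fun p : {f : Fin n → ℕ // StrictAnti f} × Equiv.Perm (Fin n)
        => T (e p)) := hTsum.comp_injective he_inj
    rw [show (fun p : {f : Fin n → ℕ // StrictAnti f} × Equiv.Perm (Fin n) => T (e p))
      = fun p => T p.1.1 from hTe] at hsum' ⊢
    rw [Summable.tsum_prod' hsum' (fun g => summable_of_finite_support (Set.toFinite _))]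
    have h5 : ∀ i : {f : Fin n → ℕ // StrictAnti f},
        ∑' _ : Equiv.Perm (Fin n), T i.1 = ((n.factorial : ℕ) : ℝ) * T i.1 := by
      intro i
      rw [tsum_fintype]
      rw [Finset.sum_const, Finset.card_univ, Fintype.card_perm, Fintype.card_fin,
        nsmul_eq_mul]
    rw [tsum_congr h5, tsum_mul_left]
  rw [hchain, ← mul_assoc, inv_mul_cancel₀ (by positivity : ((n.factorial : ℕ) : ℝ) ≠ 0),
    one_mul]


/-- Expansion of the hyperdeterminant of the kernel `(1 - x₁⋯x_{2m})^{-a}` as a sum over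
strictly decreasing tuples of nonnegative integers, together with its nonnegativity when
`a ≥ 0` and the vectors are strictly decreasing with nonnegative coordinates. -/
theorem hyperDet_negative_binomial (a : ℝ) (m n : ℕ) (hm : 0 < m) (hn : 0 < n)
    (x : Fin (2 * m) → Fin n → ℝ)
    (hlt : ∀ r : Fin (2 * m) → Fin n, |∏ k : Fin (2 * m), x k (r k)| < 1) :
    hyperDet m n (fun r => (1 - ∏ k : Fin (2 * m), x k (r k)) ^ (-a)) =
      (∑' i : {f : Fin n → ℕ // StrictAnti f},
        (∏ j : Fin n, risingFactorial a (i.1 j) * ((Nat.factorial (i.1 j) : ℝ))⁻¹) *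
          ∏ k : Fin (2 * m), Matrix.det (Matrix.of fun r s : Fin n => x k r ^ (i.1 s))) ∧
    (0 ≤ a → (∀ k, StrictAnti (x k)) → (∀ k j, 0 ≤ x k j) →
      0 ≤ hyperDet m n (fun r => (1 - ∏ k : Fin (2 * m), x k (r k)) ^ (-a))) := by
  have key' : hyperDet m n (fun r => (1 - ∏ k : Fin (2 * m), x k (r k)) ^ (-a)) =
      ∑' i : {f : Fin n → ℕ // StrictAnti f},
        (∏ j : Fin n, risingFactorial a (i.1 j) * ((Nat.factorial (i.1 j) : ℝ))⁻¹) *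
          ∏ k : Fin (2 * m), Matrix.det (Matrix.of fun r s : Fin n => x k r ^ (i.1 s)) := by
    have key := main_thm a m n hm hn x hlt
    simp only [hyperDet]
    exact key
  refine ⟨key', fun ha hanti hnn => ?_⟩
  rw [key']
  apply tsum_nonneg
  intro i
  apply mul_nonneg
  · exact Finset.prod_nonneg fun j _ => rfc_nonneg ha (i.1 j)
  · exact Finset.prod_nonneg fun k _ => gv_nonneg n (x k) (hanti k) (hnn k) i.1 i.2
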